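/- Let U be a chain code with qturn(P) ∈ {-1, 0, 1} for every prefix P of U. If P is a prefix of U with qturn(P) = 0, then the final point of the unfolding dual path of P has y-coordinate strictly greater than the y-coordinate of every earlier point of that path. -/

import Mathlib

inductive TurnSym : Type
  | L | R | S
deriving DecidableEq

def qt : TurnSym → ℤ
  | TurnSym.L => -1
  | TurnSym.R => 1
  | TurnSym.S => 0

def qturn (U : List TurnSym) : ℤ := (U.map qt).sum

def rot : TurnSym → ℤ × ℤ → ℤ × ℤ
  | TurnSym.R, d => (d.2, -d.1)
  | TurnSym.L, d => (-d.2, d.1)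
  | TurnSym.S, d => d

def pathStep (s : (ℤ × ℤ) × (ℤ × ℤ)) (a : TurnSym) : (ℤ × ℤ) × (ℤ × ℤ) :=
  let d := rot a s.2
  (s.1 + d, d)

/-- Points p_0 = (0,0), p_1 = (0,1), ..., p_{n+1} of the unfolding dual path. -/
def pts (U : List TurnSym) : List (ℤ × ℤ) :=
  (0, 0) :: (List.scanl pathStep ((0, 1), (0, 1)) U).map Prod.fst

/-- 90° clockwise rotation. -/
def cw (d : ℤ × ℤ) : ℤ × ℤ := (d.2, -d.1)

/-- Final heading after processing a chain code from initial heading (0,1). -/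
def headAfter (U : List TurnSym) : ℤ × ℤ := U.foldl (fun d a => rot a d) (0, 1)

/-- Reflection of a chain code: swap L and R. -/
def reflCode (U : List TurnSym) : List TurnSym :=
  U.map fun a => match a with
    | TurnSym.L => TurnSym.R
    | TurnSym.R => TurnSym.L
    | TurnSym.S => TurnSym.S

/-- Action of a chain code on an arbitrary initial heading. -/
def act (U : List TurnSym) (d : ℤ × ℤ) : ℤ × ℤ := U.foldl (fun d a => rot a d) d

section Helpers

def dir (k : ℤ) : ℤ × ℤ := if k = 1 then (1,0) else if k = -1 then (-1,0) else (0,1)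

lemma scanl_concat {α β : Type*} (f : β → α → β) (b : β) (l : List α) (a : α) :
    List.scanl f b (l ++ [a]) = List.scanl f b l ++ [f (List.foldl f b l) a] := by
  induction l generalizing b with
  | nil => simp [List.scanl]
  | cons x t ih => simp [List.scanl_cons, ih]

lemma getLastD_scanl_map (P : List TurnSym) :
    ∀ s x, ((List.scanl pathStep s P).map Prod.fst).getLastD x = (P.foldl pathStep s).1 := by
  induction P with
  | nil => intro s x; rfl
  | cons a t ih =>
    intro s x
    rw [List.scanl_cons, List.map_cons, List.getLastD_cons, List.foldl_cons, ih]

lemma last_pts (P : List TurnSym) :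
    (pts P).getLastD (0,0) = (P.foldl pathStep ((0,1),(0,1))).1 := by
  unfold pts
  rw [List.getLastD_cons, getLastD_scanl_map]

lemma snd_fold (P : List TurnSym) :
    ∀ s, (P.foldl pathStep s).2 = P.foldl (fun d a => rot a d) s.2 := by
  induction P with
  | nil => intro s; rfl
  | cons a t ih => intro s; simp [List.foldl, ih, pathStep]

lemma qturn_concat (Q : List TurnSym) (a : TurnSym) :
    qturn (Q ++ [a]) = qturn Q + qt a := by simp [qturn]

lemma heads (P : List TurnSym)
    (h : ∀ Q, Q <+: P → qturn Q ∈ ({-1, 0, 1} : Set ℤ)) :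
    headAfter P = dir (qturn P) := by
  induction P using List.reverseRecOn with
  | nil => simp [headAfter, qturn, dir]
  | append_singleton Q a ih =>
    have hQ : ∀ R, R <+: Q → qturn R ∈ ({-1, 0, 1} : Set ℤ) := fun R hR =>
      h R (hR.trans (Q.prefix_append [a]))
    have ihQ := ih hQ
    have hk := hQ Q Q.prefix_refl
    have hka := h (Q ++ [a]) (List.prefix_refl _)
    have hA : headAfter (Q ++ [a]) = rot a (headAfter Q) := by
      simp [headAfter, List.foldl_append]
    rw [hA, ihQ, qturn_concat]
    simp only [Set.mem_insert_iff, Set.mem_singleton_iff] at hk hka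
    rw [qturn_concat] at hka
    rcases hk with hk | hk | hk <;> cases a <;>
      simp_all [dir, rot, qt]

lemma dir_snd_nonneg (k : ℤ) : 0 ≤ (dir k).2 := by
  unfold dir; split_ifs <;> simp

lemma dir_snd_le_one (k : ℤ) : (dir k).2 ≤ 1 := by
  unfold dir; split_ifs <;> simp

lemma main_lemma (P : List TurnSym)
    (h : ∀ Q, Q <+: P → qturn Q ∈ ({-1, 0, 1} : Set ℤ)) :
    (∀ q ∈ pts P, q.2 ≤ ((pts P).getLastD (0,0)).2) ∧
    (qturn P = 0 → ∀ q ∈ (pts P).dropLast, q.2 < ((pts P).getLastD (0,0)).2) := by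
  induction P using List.reverseRecOn with
  | nil =>
    constructor
    · intro q hq
      simp [pts, List.scanl] at hq
      rcases hq with h1 | h1 <;> simp [h1, pts, List.scanl]
    · intro _ q hq
      simp [pts, List.scanl] at hq
      simp [hq, pts, List.scanl]
  | append_singleton Q a ih =>
    have hQ : ∀ R, R <+: Q → qturn R ∈ ({-1, 0, 1} : Set ℤ) := fun R hR =>
      h R (hR.trans (Q.prefix_append [a]))
    obtain ⟨ih1, _⟩ := ih hQ
    set p := Q.foldl pathStep ((0,1),(0,1)) with hp
    have hpts : pts (Q ++ [a]) = pts Q ++ [(pathStep p a).1] := by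
      simp [pts, scanl_concat, hp]
    have hhead : (pathStep p a).2 = dir (qturn (Q ++ [a])) := by
      have h1 : (pathStep p a).2 = rot a p.2 := rfl
      have h2 : p.2 = headAfter Q := by
        rw [hp, snd_fold]; rfl
      have h3 : headAfter (Q ++ [a]) = rot a (headAfter Q) := by
        simp [headAfter, List.foldl_append]
      rw [h1, h2, ← h3, heads _ h]
    have hnew : (pathStep p a).1 = p.1 + dir (qturn (Q ++ [a])) := by
      have h1 : (pathStep p a).1 = p.1 + (pathStep p a).2 := rfl
      rw [h1, hhead]
    have hlastQ : ((pts Q).getLastD (0,0)) = p.1 := last_pts Q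
    have hlast : ((pts (Q ++ [a])).getLastD (0,0)) = p.1 + dir (qturn (Q ++ [a])) := by
      rw [hpts, ← hnew, List.getLastD_concat]
    have hdrop : (pts (Q ++ [a])).dropLast = pts Q := by
      rw [hpts, List.dropLast_concat]
    constructor
    · intro q hq
      rw [hpts] at hq
      rw [hlast]
      rcases List.mem_append.1 hq with hq | hq
      · have := ih1 q hq
        rw [hlastQ] at this
        have := dir_snd_nonneg (qturn (Q ++ [a]))
        simp only [Prod.snd_add]
        omega
      · simp at hq
        rw [hq, hnew]
    · intro h0 q hq
      rw [hdrop] at hq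
      rw [hlast]
      have := ih1 q hq
      rw [hlastQ] at this
      have hd : (dir (qturn (Q ++ [a]))).2 = 1 := by rw [h0]; simp [dir]
      simp only [Prod.snd_add, hd]
      omega

end Helpers

theorem stmt2' (U P : List TurnSym)
    (h : ∀ Q, Q <+: U → qturn Q ∈ ({-1, 0, 1} : Set ℤ))
    (hP : P <+: U) (h0 : qturn P = 0) :
    ∀ q ∈ (pts P).dropLast, q.2 < ((pts P).getLastD (0, 0)).2 := by
  exact (main_lemma P (fun Q hQ => h Q (hQ.trans hP))).2 h0


theorem stmt2 (U P : List TurnSym)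
    (h : ∀ Q, Q <+: U → qturn Q ∈ ({-1, 0, 1} : Set ℤ))
    (hP : P <+: U) (h0 : qturn P = 0) :
    ∀ q ∈ (pts P).dropLast, q.2 < ((pts P).getLastD (0, 0)).2 := stmt2' U P h hP h0
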